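/- Let D be a division ring and let A be an additive subgroup of (D,+) of infinite index in D. Suppose there is a natural number k such that the index [A : A ∩ λA] is at most k for every λ ∈ D∖{0}, where λA = {λa : a ∈ A}. Then A is finite. -/

import Mathlib

namespace Stmt6Aux

open AddSubgroup

section Generic

variable {G : Type*} [AddCommGroup G]

lemma finite_sup_carrier {H K : AddSubgroup G}
    (hH : (H : Set G).Finite) (hK : (K : Set G).Finite) :
    ((H ⊔ K : AddSubgroup G) : Set G).Finite := by
  have hsub : ((H ⊔ K : AddSubgroup G) : Set G) ⊆ Set.image2 (· + ·) (H : Set G) (K : Set G) := by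
    intro x hx
    rcases (AddSubgroup.mem_sup).1 hx with ⟨y, hy, z, hz, rfl⟩
    exact Set.mem_image2_of_mem hy hz
  exact (hH.image2 _ hK).subset hsub

lemma finite_closure {n : ℕ} (hn : n ≠ 0)
    (tor : ∀ x : G, n • x = 0) {s : Set G} (hs : s.Finite) :
    ((AddSubgroup.closure s : AddSubgroup G) : Set G).Finite := by
  classical
  lift s to Finset G using hs
  induction s using Finset.induction_on with
  | empty => simp
  | insert a t ha ih =>
      rw [Finset.coe_insert, Set.insert_eq, AddSubgroup.closure_union]
      apply finite_sup_carrier _ ih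
      rw [← AddSubgroup.zmultiples_eq_closure]
      have hfin : IsOfFinAddOrder a :=
        isOfFinAddOrder_iff_nsmul_eq_zero.2 ⟨n, Nat.pos_of_ne_zero hn, tor a⟩
      exact hfin.finite_zmultiples

lemma exists_witnesses (H : AddSubgroup G) (P : ℕ)
    (h : ¬ (H.index ≠ 0 ∧ H.index ≤ P)) :
    ∃ x : Fin (P + 1) → G, ∀ i j, i ≠ j → x i - x j ∉ H := by
  classical
  have hemb : ∃ f : Fin (P + 1) → G ⧸ H, Function.Injective f := by
    by_cases h0 : H.index = 0
    · have hinf : Infinite (G ⧸ H) := by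
        rcases (Nat.card_eq_zero).1 h0 with h1 | h2
        · exact (h1.false (0 : G ⧸ H)).elim
        · exact h2
      exact ⟨fun i => (Infinite.natEmbedding (G ⧸ H)) i.val,
        (Infinite.natEmbedding (G ⧸ H)).injective.comp Fin.val_injective⟩
    · have hgt : P + 1 ≤ H.index := by
        rcases Nat.lt_or_ge P H.index with h' | h'
        · omega
        · exact absurd ⟨h0, h'⟩ h
      have hfin : Finite (G ⧸ H) := Nat.finite_of_card_ne_zero h0
      have : Fintype (G ⧸ H) := Fintype.ofFinite _
      have hcard : Fintype.card (Fin (P + 1)) ≤ Fintype.card (G ⧸ H) := by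
        rw [Fintype.card_fin, ← Nat.card_eq_fintype_card]
        exact hgt
      obtain ⟨f⟩ := Function.Embedding.nonempty_of_card_le hcard
      exact ⟨f, f.injective⟩
  obtain ⟨f, hf⟩ := hemb
  refine ⟨fun i => (f i).out, fun i j hij hmem => hij (hf ?_)⟩
  rw [← QuotientAddGroup.out_eq' (f i), ← QuotientAddGroup.out_eq' (f j)]
  exact (QuotientAddGroup.eq_iff_sub_mem).2 hmem

lemma translate_bound {F H : AddSubgroup G}
    (hF : (F : Set G).Finite) {m : ℕ}
    (x : Fin m → G) (hxF : ∀ i, x i ∈ F) (hsep : ∀ i j, i ≠ j → x i - x j ∉ H) :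
    m * Nat.card ↥(F ⊓ H) ≤ Nat.card ↥F := by
  classical
  have : Finite ↥F := hF.to_subtype
  have hinj : Function.Injective
      (fun p : Fin m × ↥(F ⊓ H) => (⟨x p.1 + ↑p.2, add_mem (hxF p.1) p.2.2.1⟩ : ↥F)) := by
    rintro ⟨i, h1⟩ ⟨j, h2⟩ heq
    simp only [Subtype.mk_eq_mk] at heq
    by_cases hij : i = j
    · subst hij
      have : (h1 : G) = (h2 : G) := add_left_cancel heq
      simp [Prod.ext_iff, Subtype.ext_iff, this]
    · exfalso
      apply hsep i j hij
      have hx : x i - x j = (h2 : G) - (h1 : G) := by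
        rw [sub_eq_sub_iff_add_eq_add, heq, add_comm]
      rw [hx]
      exact sub_mem h2.2.2 h1.2.2
  have hle := Nat.card_le_card_of_injective _ hinj
  rwa [Nat.card_prod, Nat.card_eq_fintype_card (α := Fin m), Fintype.card_fin] at hle

end Generic

section DivRing

variable {D : Type*} [DivisionRing D]

lemma subgroup_toFinset_card {X : AddSubgroup D} (hX : (X : Set D).Finite) :
    hX.toFinset.card = Nat.card ↥X := by
  rw [← Set.ncard_eq_toFinset_card _ hX, ← Nat.card_coe_set_eq]
  rfl

lemma filter_mem_card {F : AddSubgroup D} (hF : (F : Set D).Finite) (H : AddSubgroup D)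
    [DecidablePred (· ∈ H)] :
    (hF.toFinset.filter (· ∈ H)).card = Nat.card ↥(F ⊓ H) := by
  classical
  have hFH : ((F ⊓ H : AddSubgroup D) : Set D).Finite := by
    apply hF.subset
    intro x hx
    exact hx.1
  rw [← subgroup_toFinset_card hFH]
  congr 1
  ext x
  simp [AddSubgroup.mem_inf]

lemma card_inf_le {F H : AddSubgroup D} (hF : (F : Set D).Finite) :
    Nat.card ↥(F ⊓ H) ≤ Nat.card ↥F := by
  have : Finite ↥F := hF.to_subtype
  have hinj : Function.Injective (fun x : ↥(F ⊓ H) => (⟨x.1, x.2.1⟩ : ↥F)) := by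
    intro a b hab
    exact Subtype.ext (Subtype.mk_eq_mk.mp hab)
  exact Nat.card_le_card_of_injective _ hinj

lemma card_le_of_relIndex' {Y C A : AddSubgroup D} (hYA : Y ≤ A) {k : ℕ}
    (h0 : C.relIndex A ≠ 0) (hle : C.relIndex A ≤ k) :
    Nat.card ↥Y ≤ k * Nat.card ↥(C ⊓ Y) := by
  have h1 : C.relIndex Y ≤ k :=
    le_trans (AddSubgroup.relIndex_le_of_le_right hYA h0) hle
  have h2 : (C.addSubgroupOf Y).index * Nat.card ↥(C.addSubgroupOf Y) = Nat.card ↥Y :=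
    AddSubgroup.index_mul_card _
  have h3 : Nat.card ↥(C.addSubgroupOf Y) = Nat.card ↥(C ⊓ Y) := by
    rw [← AddSubgroup.inf_addSubgroupOf_right]
    exact Nat.card_congr (AddSubgroup.addSubgroupOfEquivOfLe inf_le_right).toEquiv
  calc Nat.card ↥Y = C.relIndex Y * Nat.card ↥(C ⊓ Y) := by
        rw [← h2, h3]; rfl
    _ ≤ k * Nat.card ↥(C ⊓ Y) := Nat.mul_le_mul_right _ h1

lemma relIndex_comap_mulLeft'' {A : AddSubgroup D} {k : ℕ}
    (hk : ∀ l : D, l ≠ 0 →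
      ((A ⊓ A.map (AddMonoidHom.mulLeft l)).addSubgroupOf A).index ≠ 0 ∧
      ((A ⊓ A.map (AddMonoidHom.mulLeft l)).addSubgroupOf A).index ≤ k)
    {u : D} (hu : u ≠ 0) :
    (A.comap (AddMonoidHom.mulLeft u)).relIndex A ≠ 0 ∧
      (A.comap (AddMonoidHom.mulLeft u)).relIndex A ≤ k := by
  have h := hk u⁻¹ (inv_ne_zero hu)
  have heq : (A.comap (AddMonoidHom.mulLeft u)).relIndex A
      = ((A ⊓ A.map (AddMonoidHom.mulLeft u⁻¹)).addSubgroupOf A).index := by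
    have hcm : A.comap (AddMonoidHom.mulLeft u) = A.map (AddMonoidHom.mulLeft u⁻¹) := by
      ext x
      simp only [AddSubgroup.mem_comap, AddSubgroup.mem_map, AddMonoidHom.coe_mulLeft]
      constructor
      · intro h'
        exact ⟨u * x, h', by rw [inv_mul_cancel_left₀ hu]⟩
      · rintro ⟨a, ha, rfl⟩
        rwa [mul_inv_cancel_left₀ hu]
    rw [hcm]
    rw [show ((A ⊓ A.map (AddMonoidHom.mulLeft u⁻¹)).addSubgroupOf A).index
        = (A ⊓ A.map (AddMonoidHom.mulLeft u⁻¹)).relIndex A from rfl]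
    rw [inf_comm, AddSubgroup.inf_relIndex_right]
  rw [heq]
  exact h

/-- The preimage under right multiplication by `w` of `A + Aw`. -/
def SD (A : AddSubgroup D) (w : D) : AddSubgroup D :=
  (A ⊔ A.map (AddMonoidHom.mulRight w)).comap (AddMonoidHom.mulRight w)

/-- The preimage of `A` under right multiplication by `w`. -/
def RD (A : AddSubgroup D) (w : D) : AddSubgroup D :=
  A.comap (AddMonoidHom.mulRight w)

lemma mem_SD {A : AddSubgroup D} {w d : D} :
    d ∈ SD A w ↔ d * w ∈ A ⊔ A.map (AddMonoidHom.mulRight w) := Iff.rfl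

lemma mem_RD {A : AddSubgroup D} {w u : D} : u ∈ RD A w ↔ u * w ∈ A := Iff.rfl

lemma mulRight_surjective {w : D} (hw : w ≠ 0) :
    Function.Surjective (AddMonoidHom.mulRight w : D →+ D) := by
  intro y
  exact ⟨y * w⁻¹, by simp [AddMonoidHom.coe_mulRight, inv_mul_cancel_right₀ hw]⟩

lemma index_ne_zero_of_w {A : AddSubgroup D} {w : D} (hw : w ≠ 0)
    (h1 : (SD A w).index ≠ 0) (h2 : (RD A w).relIndex A ≠ 0) :
    A.index ≠ 0 := by
  set ρ : D →+ D := AddMonoidHom.mulRight w with hρ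
  set T : AddSubgroup D := A ⊔ A.map ρ with hT
  have hTindex : T.index ≠ 0 := by
    have : (T.comap ρ).index = T.relIndex ρ.range := AddSubgroup.index_comap T ρ
    rw [AddMonoidHom.range_eq_top_of_surjective ρ (mulRight_surjective hw),
      AddSubgroup.relIndex_top_right] at this
    rw [← this]
    exact h1
  have hrel : A.relIndex T ≠ 0 := by
    have e1 : A.relIndex T = A.relIndex (A.map ρ) :=
      AddSubgroup.relIndex_sup_left (A.map ρ) A
    have e2 : (A.comap ρ).relIndex A = A.relIndex (A.map ρ) :=
      AddSubgroup.relIndex_comap (H := A) ρ A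
    rw [e1, ← e2]
    exact h2
  have := AddSubgroup.relIndex_mul_index (le_sup_left : A ≤ T)
  intro h0
  rw [h0] at this
  exact Nat.mul_ne_zero hrel hTindex this

lemma factorial_smul_mem {A : AddSubgroup D} {k : ℕ}
    (hk : ∀ l : D, l ≠ 0 →
      ((A ⊓ A.map (AddMonoidHom.mulLeft l)).addSubgroupOf A).index ≠ 0 ∧
      ((A ⊓ A.map (AddMonoidHom.mulLeft l)).addSubgroupOf A).index ≤ k)
    {a₀ : D} (ha₀A : a₀ ∈ A) (ha₀ : a₀ ≠ 0) (x : D) :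
    k.factorial • x ∈ A := by
  rcases eq_or_ne x 0 with rfl | hx
  · simpa using A.zero_mem
  set d : D := x * a₀⁻¹ with hd
  have hdne : d ≠ 0 := by
    simp only [hd]
    exact mul_ne_zero hx (inv_ne_zero ha₀)
  set T : AddSubgroup D := A ⊔ A.map (AddMonoidHom.mulLeft d) with hT
  have hq : A.relIndex T ≠ 0 ∧ A.relIndex T ≤ k := by
    have e1 : A.relIndex T = A.relIndex (A.map (AddMonoidHom.mulLeft d)) :=
      AddSubgroup.relIndex_sup_left (A.map (AddMonoidHom.mulLeft d)) A
    have e2 : (A.comap (AddMonoidHom.mulLeft d)).relIndex A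
        = A.relIndex (A.map (AddMonoidHom.mulLeft d)) :=
      AddSubgroup.relIndex_comap (H := A) (AddMonoidHom.mulLeft d) A
    rw [e1, ← e2]
    exact relIndex_comap_mulLeft'' hk hdne
  have hxT : x ∈ T := by
    have : x = (AddMonoidHom.mulLeft d) a₀ := by
      simp only [AddMonoidHom.coe_mulLeft, hd]
      rw [inv_mul_cancel_right₀ ha₀]
    rw [this]
    exact AddSubgroup.mem_sup_right (AddSubgroup.mem_map_of_mem _ ha₀A)
  set ξ : ↥T := ⟨x, hxT⟩ with hξ
  have hord : addOrderOf (QuotientAddGroup.mk (s := A.addSubgroupOf T) ξ) ∣ k.factorial := by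
    have h1 : addOrderOf (QuotientAddGroup.mk (s := A.addSubgroupOf T) ξ)
        ∣ Nat.card (↥T ⧸ A.addSubgroupOf T) := addOrderOf_dvd_natCard _
    have h2 : Nat.card (↥T ⧸ A.addSubgroupOf T) = A.relIndex T := rfl
    rw [h2] at h1
    exact h1.trans (Nat.dvd_factorial (Nat.pos_of_ne_zero hq.1) hq.2)
  have hzero : (k.factorial • (QuotientAddGroup.mk (s := A.addSubgroupOf T) ξ) :
      ↥T ⧸ A.addSubgroupOf T) = 0 :=
    addOrderOf_dvd_iff_nsmul_eq_zero.mp hord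
  have hmem : k.factorial • ξ ∈ A.addSubgroupOf T := by
    rw [← QuotientAddGroup.eq_zero_iff]
    rw [← hzero]
    rfl
  have : ((k.factorial • ξ : ↥T) : D) ∈ A := hmem
  simpa using this

lemma eq_top_of_factorial_unit {A : AddSubgroup D} {k : ℕ}
    (hcast : (k.factorial : D) ≠ 0)
    (hsmul : ∀ x : D, k.factorial • x ∈ A) : A = ⊤ := by
  ext x
  simp only [AddSubgroup.mem_top, iff_true]
  have := hsmul ((k.factorial : D)⁻¹ * x)
  rwa [nsmul_eq_mul, mul_inv_cancel_left₀ hcast] at this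

/-- The central counting lemma. -/
lemma perconfig {A E' : AddSubgroup D} {k : ℕ} (hk1 : 1 ≤ k)
    (hk : ∀ l : D, l ≠ 0 →
      ((A ⊓ A.map (AddMonoidHom.mulLeft l)).addSubgroupOf A).index ≠ 0 ∧
      ((A ⊓ A.map (AddMonoidHom.mulLeft l)).addSubgroupOf A).index ≤ k)
    (hE'A : E' ≤ A) (hE'fin : (E' : Set D).Finite)
    (hE'card : 2 * k ^ 2 ≤ Nat.card ↥E')
    (F M : AddSubgroup D)
    (hFfin : (F : Set D).Finite) (hMfin : (M : Set D).Finite) :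
    ∃ w : D, w ∈ E' ∧ w ≠ 0 ∧
      Nat.card ↥F * Nat.card ↥M ≤ 2 * k ^ 2 *
        (Nat.card ↥(F ⊓ SD A w) * Nat.card ↥(M ⊓ RD A w)) := by
  classical
  by_contra hcon
  push_neg at hcon
  set Ef := hE'fin.toFinset with hEf
  set Ff := hFfin.toFinset with hFf
  set Mf := hMfin.toFinset with hMf
  set W := Ef.erase 0 with hW
  set cE := Nat.card ↥E' with hcE
  set cF := Nat.card ↥F with hcF
  set cM := Nat.card ↥M with hcM
  have hcE' : Ef.card = cE := subgroup_toFinset_card hE'fin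
  have hcF' : Ff.card = cF := subgroup_toFinset_card hFfin
  have hcM' : Mf.card = cM := subgroup_toFinset_card hMfin
  have h0E : (0 : D) ∈ Ef := by
    rw [hEf, Set.Finite.mem_toFinset]
    exact E'.zero_mem
  have hWcard : W.card + 1 = cE := by
    rw [hW, Finset.card_erase_of_mem h0E]
    have : 1 ≤ Ef.card := Finset.card_pos.mpr ⟨0, h0E⟩
    omega
  set NN := ∑ w ∈ W, (Ff.filter (· ∈ SD A w)).card * (Mf.filter (· ∈ RD A w)).card with hNN
  have hup : 2 * k ^ 2 * NN + W.card ≤ W.card * (cF * cM) := by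
    rw [hNN, Finset.mul_sum]
    have hterm : ∀ w ∈ W,
        2 * k ^ 2 * ((Ff.filter (· ∈ SD A w)).card * (Mf.filter (· ∈ RD A w)).card) + 1
        ≤ cF * cM := by
      intro w hw
      have hwE' : w ∈ E' := by
        have := Finset.mem_of_mem_erase hw
        rwa [hEf, Set.Finite.mem_toFinset] at this
      have hw0 : w ≠ 0 := Finset.ne_of_mem_erase hw
      have hlt := hcon w hwE' hw0
      rw [filter_mem_card hFfin (SD A w), filter_mem_card hMfin (RD A w)]
      omega
    calc (∑ w ∈ W, 2 * k ^ 2 * ((Ff.filter (· ∈ SD A w)).card * (Mf.filter (· ∈ RD A w)).card))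
          + W.card
        = ∑ w ∈ W, (2 * k ^ 2 *
            ((Ff.filter (· ∈ SD A w)).card * (Mf.filter (· ∈ RD A w)).card) + 1) := by
          rw [Finset.sum_add_distrib, Finset.sum_const, smul_eq_mul, mul_one]
      _ ≤ ∑ _w ∈ W, (cF * cM) := Finset.sum_le_sum hterm
      _ = W.card * (cF * cM) := by rw [Finset.sum_const, smul_eq_mul]
  have hNN' : NN = ∑ d ∈ Ff, ∑ u ∈ Mf,
      (W.filter (fun w => d ∈ SD A w ∧ u ∈ RD A w)).card := by
    rw [hNN]
    have h1 : ∀ w ∈ W, (Ff.filter (· ∈ SD A w)).card * (Mf.filter (· ∈ RD A w)).card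
        = ∑ d ∈ Ff, ∑ u ∈ Mf, (if d ∈ SD A w ∧ u ∈ RD A w then 1 else 0) := by
      intro w _
      rw [Finset.card_filter, Finset.card_filter, Finset.sum_mul_sum]
      refine Finset.sum_congr rfl fun d _ => Finset.sum_congr rfl fun u _ => ?_
      by_cases hp : d ∈ SD A w <;> by_cases hq : u ∈ RD A w <;> simp [hp, hq]
    rw [Finset.sum_congr rfl h1, Finset.sum_comm]
    refine Finset.sum_congr rfl fun d _ => ?_
    rw [Finset.sum_comm]
    refine Finset.sum_congr rfl fun u _ => ?_
    rw [Finset.card_filter]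
  have hpair : ∀ d ∈ Ff, ∀ u ∈ Mf,
      cE ≤ k ^ 2 * ((W.filter (fun w => d ∈ SD A w ∧ u ∈ RD A w)).card + 1) := by
    intro d hd u hu
    set Cd : AddSubgroup D := if d ∈ A then ⊤ else A.comap (AddMonoidHom.mulLeft d) with hCd
    set Cu : AddSubgroup D := if u = 0 then ⊤ else A.comap (AddMonoidHom.mulLeft u) with hCu
    set J : AddSubgroup D := Cd ⊓ (Cu ⊓ E') with hJ
    have hJE' : J ≤ E' := le_trans inf_le_right inf_le_right
    have hJfin : (J : Set D).Finite := hE'fin.subset hJE'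
    have hstep1 : Nat.card ↥E' ≤ k * Nat.card ↥(Cu ⊓ E') := by
      rcases eq_or_ne u 0 with h0 | h0
      · rw [hCu, if_pos h0]
        apply card_le_of_relIndex' hE'A (A := A)
        · rw [AddSubgroup.relIndex_top_left]; exact one_ne_zero
        · rw [AddSubgroup.relIndex_top_left]; exact hk1
      · rw [hCu, if_neg h0]
        obtain ⟨hne, hle⟩ := relIndex_comap_mulLeft'' hk h0
        exact card_le_of_relIndex' hE'A hne hle
    have hstep2 : Nat.card ↥(Cu ⊓ E') ≤ k * Nat.card ↥J := by
      have hle' : Cu ⊓ E' ≤ A := le_trans inf_le_right hE'A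
      by_cases hdA : d ∈ A
      · rw [hJ, hCd, if_pos hdA, top_inf_eq]
        exact Nat.le_mul_of_pos_left _ (Nat.pos_of_ne_zero (by omega))
      · have hd0 : d ≠ 0 := fun h => hdA (h ▸ A.zero_mem)
        rw [hJ, hCd, if_neg hdA]
        obtain ⟨hne, hle⟩ := relIndex_comap_mulLeft'' hk hd0
        exact card_le_of_relIndex' hle' hne hle
    have hsub : hJfin.toFinset.erase 0 ⊆ W.filter (fun w => d ∈ SD A w ∧ u ∈ RD A w) := by
      intro w hw
      have hw0 : w ≠ 0 := Finset.ne_of_mem_erase hw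
      have hwJ : w ∈ J := by
        have h' := Finset.mem_of_mem_erase hw
        rw [Set.Finite.mem_toFinset] at h'
        exact h'
      have hwE' : w ∈ E' := hJE' hwJ
      rw [Finset.mem_filter]
      refine ⟨?_, ?_, ?_⟩
      · rw [hW, Finset.mem_erase]
        exact ⟨hw0, by rw [hEf, Set.Finite.mem_toFinset]; exact hwE'⟩
      · rw [mem_SD]
        by_cases hdA : d ∈ A
        · exact AddSubgroup.mem_sup_right ⟨d, hdA, rfl⟩
        · have hwCd : w ∈ Cd := hwJ.1
          rw [hCd, if_neg hdA] at hwCd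
          exact AddSubgroup.mem_sup_left hwCd
      · rw [mem_RD]
        rcases eq_or_ne u 0 with h0 | h0
        · rw [h0, zero_mul]; exact A.zero_mem
        · have hwCu : w ∈ Cu := hwJ.2.1
          rw [hCu, if_neg h0] at hwCu
          exact hwCu
    have hcard1 : Nat.card ↥J
        ≤ (W.filter (fun w => d ∈ SD A w ∧ u ∈ RD A w)).card + 1 := by
      have h1 : hJfin.toFinset.card = Nat.card ↥J := subgroup_toFinset_card hJfin
      have h2 := Finset.card_le_card hsub
      have h3 : (0:D) ∈ hJfin.toFinset := by
        rw [Set.Finite.mem_toFinset]; exact J.zero_mem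
      rw [Finset.card_erase_of_mem h3] at h2
      omega
    calc cE = Nat.card ↥E' := hcE
      _ ≤ k * Nat.card ↥(Cu ⊓ E') := hstep1
      _ ≤ k * (k * Nat.card ↥J) := Nat.mul_le_mul_left _ hstep2
      _ = k ^ 2 * Nat.card ↥J := by ring
      _ ≤ k ^ 2 * ((W.filter (fun w => d ∈ SD A w ∧ u ∈ RD A w)).card + 1) :=
          Nat.mul_le_mul_left _ hcard1
  have hlow : cE * (cF * cM) ≤ k ^ 2 * NN + k ^ 2 * (cF * cM) := by
    have hsum : ∑ d ∈ Ff, ∑ u ∈ Mf, cE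
        ≤ ∑ d ∈ Ff, ∑ u ∈ Mf, k ^ 2 *
          ((W.filter (fun w => d ∈ SD A w ∧ u ∈ RD A w)).card + 1) :=
      Finset.sum_le_sum fun d hd => Finset.sum_le_sum fun u hu => hpair d hd u hu
    have hL : ∑ _d ∈ Ff, ∑ _u ∈ Mf, cE = cE * (cF * cM) := by
      simp only [Finset.sum_const, smul_eq_mul, hcF', hcM']
      ring
    have hR : ∑ d ∈ Ff, ∑ u ∈ Mf, k ^ 2 *
        ((W.filter (fun w => d ∈ SD A w ∧ u ∈ RD A w)).card + 1)
        = k ^ 2 * NN + k ^ 2 * (cF * cM) := by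
      rw [hNN']
      simp only [mul_add, mul_one, Finset.sum_add_distrib, Finset.sum_const, smul_eq_mul,
        Finset.mul_sum]
      rw [hcF', hcM']
      ring
    rw [hL, hR] at hsum
    exact hsum
  have hcF1 : 1 ≤ cF := by
    rw [← hcF']
    exact Finset.card_pos.mpr ⟨0, by rw [hFf, Set.Finite.mem_toFinset]; exact F.zero_mem⟩
  have hcM1 : 1 ≤ cM := by
    rw [← hcM']
    exact Finset.card_pos.mpr ⟨0, by rw [hMf, Set.Finite.mem_toFinset]; exact M.zero_mem⟩
  have h2 : 2 * k ^ 2 * (cF * cM) ≤ cE * (cF * cM) :=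
    Nat.mul_le_mul_right _ hE'card
  have h3 : cE * (cF * cM) = W.card * (cF * cM) + cF * cM := by
    rw [← hWcard]; ring
  have h4 : 1 ≤ cF * cM := Nat.one_le_iff_ne_zero.mpr
    (Nat.mul_ne_zero (by omega) (by omega))
  linarith [hup, hlow, h2, h3, h4]

/-- Extraction of a good element `w`. -/
lemma exists_good_w {A E' : AddSubgroup D} {k n₀ : ℕ} (hk1 : 1 ≤ k)
    (hn₀ : n₀ ≠ 0) (tor : ∀ x : D, n₀ • x = 0)
    (hk : ∀ l : D, l ≠ 0 →
      ((A ⊓ A.map (AddMonoidHom.mulLeft l)).addSubgroupOf A).index ≠ 0 ∧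
      ((A ⊓ A.map (AddMonoidHom.mulLeft l)).addSubgroupOf A).index ≤ k)
    (hE'A : E' ≤ A) (hE'fin : (E' : Set D).Finite)
    (hE'card : 2 * k ^ 2 ≤ Nat.card ↥E') :
    ∃ w : D, w ≠ 0 ∧ (SD A w).index ≠ 0 ∧ (RD A w).relIndex A ≠ 0 := by
  classical
  set P := 2 * k ^ 2 with hP
  have hSfun : ∀ w : D, ∃ x : Fin (P + 1) → D,
      ¬((SD A w).index ≠ 0 ∧ (SD A w).index ≤ P) →
        ∀ i j, i ≠ j → x i - x j ∉ SD A w := by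
    intro w
    by_cases h : (SD A w).index ≠ 0 ∧ (SD A w).index ≤ P
    · exact ⟨fun _ => 0, fun hc => absurd h hc⟩
    · obtain ⟨x, hx⟩ := exists_witnesses (SD A w) P h
      exact ⟨x, fun _ => hx⟩
  choose xS hxS using hSfun
  have hRfun : ∀ w : D, ∃ y : Fin (P + 1) → D, (∀ i, y i ∈ A) ∧
      (¬((RD A w).relIndex A ≠ 0 ∧ (RD A w).relIndex A ≤ P) →
        ∀ i j, i ≠ j → y i - y j ∉ RD A w) := by
    intro w
    by_cases h : (RD A w).relIndex A ≠ 0 ∧ (RD A w).relIndex A ≤ P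
    · exact ⟨fun _ => 0, fun _ => A.zero_mem, fun hc => absurd h hc⟩
    · obtain ⟨y, hy⟩ := exists_witnesses ((RD A w).addSubgroupOf A) P h
      refine ⟨fun i => ((y i : ↥A) : D), fun i => (y i).2, fun _ i j hij hmem => ?_⟩
      apply hy i j hij
      rw [AddSubgroup.mem_addSubgroupOf]
      simpa using hmem
  choose yR hyRA hyR using hRfun
  set Wf : Finset D := hE'fin.toFinset.erase 0 with hWf
  set X1 : Set D := ⋃ w ∈ (Wf : Set D), Set.range (xS w) with hX1
  set X2 : Set D := ⋃ w ∈ (Wf : Set D), Set.range (yR w) with hX2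
  have hX1fin : X1.Finite :=
    Set.Finite.biUnion (Wf.finite_toSet) (fun w _ => Set.finite_range _)
  have hX2fin : X2.Finite :=
    Set.Finite.biUnion (Wf.finite_toSet) (fun w _ => Set.finite_range _)
  set F : AddSubgroup D := AddSubgroup.closure X1 with hF
  set M : AddSubgroup D := AddSubgroup.closure X2 with hM
  have hFfin : (F : Set D).Finite := finite_closure hn₀ tor hX1fin
  have hMfin : (M : Set D).Finite := finite_closure hn₀ tor hX2fin
  obtain ⟨w₀, hw₀E', hw₀0, hineq⟩ :=
    perconfig hk1 hk hE'A hE'fin hE'card F M hFfin hMfin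
  have hw₀W : w₀ ∈ Wf := by
    rw [hWf, Finset.mem_erase]
    exact ⟨hw₀0, by rw [Set.Finite.mem_toFinset]; exact hw₀E'⟩
  have cardpos : ∀ (X : AddSubgroup D), (X : Set D).Finite → 1 ≤ Nat.card ↥X := by
    intro X hX
    have : Finite ↥X := hX.to_subtype
    exact Nat.one_le_iff_ne_zero.mpr (Nat.card_ne_zero.mpr ⟨⟨0, X.zero_mem⟩, this⟩)
  set a := Nat.card ↥(F ⊓ SD A w₀) with ha
  set b := Nat.card ↥(M ⊓ RD A w₀) with hb
  set cF := Nat.card ↥F with hcF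
  set cM := Nat.card ↥M with hcM
  have hFS : ((F ⊓ SD A w₀ : AddSubgroup D) : Set D).Finite :=
    hFfin.subset (fun x hx => hx.1)
  have hMR : ((M ⊓ RD A w₀ : AddSubgroup D) : Set D).Finite :=
    hMfin.subset (fun x hx => hx.1)
  have ha1 : 1 ≤ a := cardpos _ hFS
  have hb1 : 1 ≤ b := cardpos _ hMR
  have haF : a ≤ cF := card_inf_le hFfin
  have hbM : b ≤ cM := card_inf_le hMfin
  by_cases hGS : (SD A w₀).index ≠ 0 ∧ (SD A w₀).index ≤ P
  · by_cases hGR : (RD A w₀).relIndex A ≠ 0 ∧ (RD A w₀).relIndex A ≤ P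
    · exact ⟨w₀, hw₀0, hGS.1, hGR.1⟩
    · exfalso
      have hyM : ∀ i, yR w₀ i ∈ M := by
        intro i
        apply AddSubgroup.subset_closure
        rw [hX2]
        simp only [Set.mem_iUnion]
        exact ⟨w₀, Finset.mem_coe.mpr hw₀W, i, rfl⟩
      have hbound := translate_bound hMfin (yR w₀) hyM (hyR w₀ hGR)
      rw [← hb, ← hcM] at hbound
      have h5 : cF * cM ≤ P * (a * b) := hineq
      nlinarith [h5, hbound, ha1, hb1, haF, hbM, cardpos F hFfin, cardpos M hMfin]
  · exfalso
    have hxF : ∀ i, xS w₀ i ∈ F := by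
      intro i
      apply AddSubgroup.subset_closure
      rw [hX1]
      simp only [Set.mem_iUnion]
      exact ⟨w₀, Finset.mem_coe.mpr hw₀W, i, rfl⟩
    have hbound := translate_bound hFfin (xS w₀) hxF (hxS w₀ hGS)
    rw [← ha, ← hcF] at hbound
    have h5 : cF * cM ≤ P * (a * b) := hineq
    nlinarith [h5, hbound, ha1, hb1, haF, hbM, cardpos F hFfin, cardpos M hMfin]

end DivRing

end Stmt6Aux

open Stmt6Aux in
/-- Let D be a division ring and A an additive subgroup of infinite index in D. If there is a
natural number k such that the index [A : A ∩ λA] is at most k for every λ ∈ D∖{0}, then A is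
finite. -/
theorem stmt_6 (D : Type*) [DivisionRing D] (A : AddSubgroup D)
    (hinf : A.index = 0)
    (hk : ∃ k : ℕ, ∀ l : D, l ≠ 0 →
      ((A ⊓ A.map (AddMonoidHom.mulLeft l)).addSubgroupOf A).index ≠ 0 ∧
      ((A ⊓ A.map (AddMonoidHom.mulLeft l)).addSubgroupOf A).index ≤ k) :
    (A : Set D).Finite := by
  classical
  obtain ⟨k, hk⟩ := hk
  by_contra hAfin
  have hAinf : (A : Set D).Infinite := hAfin
  have hk1 : 1 ≤ k := by
    obtain ⟨h1, h2⟩ := hk 1 one_ne_zero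
    omega
  obtain ⟨a₀, ha₀⟩ := (hAinf.diff (Set.finite_singleton 0)).nonempty
  have ha₀A : a₀ ∈ A := ha₀.1
  have ha₀0 : a₀ ≠ 0 := by simpa using ha₀.2
  have hsmul : ∀ x : D, k.factorial • x ∈ A := factorial_smul_mem hk ha₀A ha₀0
  by_cases hcast : (k.factorial : D) = 0
  · -- bounded torsion case
    have tor : ∀ x : D, k.factorial • x = 0 := by
      intro x
      rw [nsmul_eq_mul, hcast, zero_mul]
    have hn₀ : k.factorial ≠ 0 := k.factorial_ne_zero
    obtain ⟨s, hsA, hsfin, hscard⟩ := hAinf.exists_subset_ncard_eq (2 * k ^ 2)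
    set E' := AddSubgroup.closure s with hE'
    have hE'A : E' ≤ A := (AddSubgroup.closure_le A).mpr hsA
    have hE'fin : (E' : Set D).Finite := finite_closure hn₀ tor hsfin
    have hE'card : 2 * k ^ 2 ≤ Nat.card ↥E' := by
      have hcoe : Nat.card ↥E' = (E' : Set D).ncard := by
        rw [← Nat.card_coe_set_eq]
        rfl
      rw [hcoe, ← hscard]
      exact Set.ncard_le_ncard AddSubgroup.subset_closure hE'fin
    obtain ⟨w, hw0, hS, hR⟩ := exists_good_w hk1 hn₀ tor hk hE'A hE'fin hE'card
    exact (index_ne_zero_of_w hw0 hS hR) hinf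
  · -- k! is invertible
    have htop := eq_top_of_factorial_unit hcast hsmul
    rw [htop, AddSubgroup.index_top] at hinf
    exact one_ne_zero hinf
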